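/- Let N, M be natural numbers with M > N, let A be a real N×M matrix and B a real M×N matrix. For an index i ∈ {1,…,M}, let A₋ᵢ denote the N×(M−1) submatrix of A obtained by deleting the i-th column and B₋ᵢ the (M−1)×N submatrix of B obtained by deleting the i-th row. Then det(A B) ≤ (M/(M−N)) · max_{1≤i≤M} det(A₋ᵢ B₋ᵢ). -/

import Mathlib

open Matrix Polynomial

variable {N : ℕ}

private lemma eval_charpoly' (M : Matrix (Fin N) (Fin N) ℝ) (r : ℝ) :
    M.charpoly.eval r = (r • (1 : Matrix (Fin N) (Fin N) ℝ) - M).det := by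
  rw [Matrix.charpoly, _root_.eval_det, Matrix.matPolyEquiv_charmatrix]
  congr 1
  rw [eval_sub, eval_X, eval_C, scalar_apply, smul_one_eq_diagonal]

private lemma det_smul_inv' (X : Matrix (Fin N) (Fin N) ℝ) (h : X.det ≠ 0) :
    X.det • X⁻¹ = X.adjugate := by
  rw [Matrix.inv_def, Ring.inverse_eq_inv', smul_smul, mul_inv_cancel₀ h, one_smul]

private lemma det_sub_col_mul_row' (X : Matrix (Fin N) (Fin N) ℝ) (h : X.det ≠ 0)
    (u v : Fin N → ℝ) :
    (X - replicateCol Unit u * replicateRow Unit v).det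
      = X.det - v ⬝ᵥ (X.adjugate *ᵥ u) := by
  have hX : IsUnit X.det := isUnit_iff_ne_zero.2 h
  have h1 : X - replicateCol Unit u * replicateRow Unit v = X + replicateCol Unit (-u) * replicateRow Unit v := by
    ext x y
    simp [Matrix.mul_apply, Matrix.replicateCol_apply, Matrix.replicateRow_apply, sub_eq_add_neg]
  rw [h1, Matrix.det_add_replicateCol_mul_replicateRow hX,
    Matrix.det_unique (1 + replicateRow Unit v * X⁻¹ * replicateCol Unit (-u))]
  have h2 : ((1 + replicateRow Unit v * X⁻¹ * replicateCol Unit (-u) : Matrix Unit Unit ℝ)) default default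
      = 1 - v ⬝ᵥ (X⁻¹ *ᵥ u) := by
    simp [Matrix.add_apply, Matrix.mul_apply, Matrix.replicateCol_apply, Matrix.replicateRow_apply,
      Matrix.one_apply, dotProduct, Matrix.mulVec, Finset.mul_sum, Finset.sum_mul,
      sub_eq_add_neg, mul_assoc]
    rw [Finset.sum_comm]
  rw [h2]
  have h3 : v ⬝ᵥ (X.adjugate *ᵥ u) = X.det * (v ⬝ᵥ (X⁻¹ *ᵥ u)) := by
    rw [← det_smul_inv' X h, Matrix.smul_mulVec, dotProduct_smul, smul_eq_mul]
  rw [h3]; ring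

variable {M : ℕ}

private lemma submatrix_mul_eq' (A : Matrix (Fin N) (Fin (M+1)) ℝ)
    (B : Matrix (Fin (M+1)) (Fin N) ℝ) (i : Fin (M+1)) :
    (A.submatrix id i.succAbove) * (B.submatrix i.succAbove id)
      = A * B - replicateCol Unit (fun x => A x i) * replicateRow Unit (fun y => B i y) := by
  ext x y
  simp only [Matrix.mul_apply, Matrix.sub_apply, Matrix.submatrix_apply, id_eq,
    Matrix.replicateCol_apply, Matrix.replicateRow_apply, Finset.univ_unique, Finset.sum_const,
    Finset.card_singleton, one_smul]
  rw [Fin.sum_univ_succAbove (fun k => A x k * B k y) i]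
  ring


private lemma sum_dot' (Y : Matrix (Fin N) (Fin N) ℝ) (A : Matrix (Fin N) (Fin (M+1)) ℝ)
    (B : Matrix (Fin (M+1)) (Fin N) ℝ) :
    ∑ i : Fin (M+1), (fun y => B i y) ⬝ᵥ (Y *ᵥ (fun x => A x i)) = (Y * (A * B)).trace := by
  simp only [dotProduct, Matrix.mulVec, Matrix.trace, Matrix.diag, Matrix.mul_apply,
    Finset.mul_sum, Finset.sum_mul]
  rw [Finset.sum_comm]
  refine Finset.sum_congr rfl fun x _ => ?_
  rw [Finset.sum_comm]
  refine Finset.sum_congr rfl fun y _ => ?_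
  refine Finset.sum_congr rfl fun i _ => ?_
  ring

private lemma sum_det_eq' (A : Matrix (Fin N) (Fin (M+1)) ℝ)
    (B : Matrix (Fin (M+1)) (Fin N) ℝ) :
    ∑ i : Fin (M+1), ((A.submatrix id i.succAbove) * (B.submatrix i.succAbove id)).det
      = ((M + 1 : ℝ) - N) * (A * B).det := by
  classical
  set X : ℝ → Matrix (Fin N) (Fin N) ℝ := fun ε => A * B + ε • 1 with hXdef
  have hXc : Continuous X := continuous_const.add (continuous_id.smul continuous_const)
  set F : ℝ → ℝ := fun ε =>
    ∑ i : Fin (M+1), (X ε - replicateCol Unit (fun x => A x i) * replicateRow Unit (fun y => B i y)).det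
    with hFdef
  set G : ℝ → ℝ := fun ε =>
    ((M + 1 : ℝ) - N) * (X ε).det + ε * ((X ε).adjugate).trace with hGdef
  have hFc : Continuous F :=
    continuous_finset_sum _ fun i _ => Continuous.matrix_det (hXc.sub continuous_const)
  have hGc : Continuous G :=
    ((continuous_const.mul hXc.matrix_det).add
      (continuous_id.mul hXc.matrix_adjugate.matrix_trace))
  -- the polynomial whose roots are the bad ε
  set p : Polynomial ℝ := Matrix.charpoly (-(A * B)) with hpdef
  have hp : p ≠ 0 := (Matrix.charpoly_monic _).ne_zero
  have heval : ∀ ε : ℝ, p.eval ε = (X ε).det := by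
    intro ε
    rw [hpdef, eval_charpoly', sub_neg_eq_add, add_comm]
  have hdense : Dense ((Set.univ : Set ℝ) \ {x | p.IsRoot x}) :=
    dense_univ.diff_finite (Polynomial.finite_setOf_isRoot hp)
  have heq : Set.EqOn F G ((Set.univ : Set ℝ) \ {x | p.IsRoot x}) := by
    intro ε hε
    have hdet : (X ε).det ≠ 0 := by
      rw [← heval ε]; exact hε.2
    have h1 : F ε = ∑ i : Fin (M+1),
        ((X ε).det - (fun y => B i y) ⬝ᵥ ((X ε).adjugate *ᵥ (fun x => A x i))) :=
      Finset.sum_congr rfl fun i _ => det_sub_col_mul_row' (X ε) hdet _ _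
    have h2 : ((X ε).adjugate * (A * B)).trace
        = (N : ℝ) * (X ε).det - ε * ((X ε).adjugate).trace := by
      have hAB : A * B = X ε - ε • 1 := by simp [hXdef]
      rw [hAB, Matrix.mul_sub, Matrix.trace_sub, Matrix.adjugate_mul,
        Matrix.trace_smul, Matrix.trace_one, Matrix.mul_smul, Matrix.mul_one,
        Matrix.trace_smul]
      simp [mul_comm]
    rw [h1, Finset.sum_sub_distrib, Finset.sum_const, Finset.card_univ, Fintype.card_fin,
      sum_dot', h2, hGdef]
    push_cast
    ring
  have hFG : F = G := Continuous.ext_on hdense hFc hGc heq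
  have h0 : F 0 = G 0 := by rw [hFG]
  have hX0 : X 0 = A * B := by simp [hXdef]
  rw [hFdef, hGdef] at h0
  simp only [hX0, zero_mul, add_zero, zero_smul] at h0
  rw [← h0]
  refine Finset.sum_congr rfl fun i _ => ?_
  rw [submatrix_mul_eq']

/-- Lemma 1: for `A : N × (M+1)`, `B : (M+1) × N` with `M + 1 > N`,
`det (A B) ≤ (M+1)/((M+1) - N) · max_i det (A₋ᵢ B₋ᵢ)`. -/
theorem det_mul_le_max_det_delete (N M : ℕ) (hNM : N < M + 1)
    (A : Matrix (Fin N) (Fin (M + 1)) ℝ) (B : Matrix (Fin (M + 1)) (Fin N) ℝ) :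
    (A * B).det
      ≤ ((M + 1 : ℝ) / ((M + 1 : ℝ) - N)) *
        Finset.univ.sup' Finset.univ_nonempty
          (fun i : Fin (M + 1) =>
            ((A.submatrix id i.succAbove) * (B.submatrix i.succAbove id)).det) := by
  classical
  set d : Fin (M+1) → ℝ := fun i =>
    ((A.submatrix id i.succAbove) * (B.submatrix i.succAbove id)).det with hd
  set S : ℝ := Finset.univ.sup' Finset.univ_nonempty d with hS
  have hpos : (0 : ℝ) < (M + 1 : ℝ) - N := by
    have : (N : ℝ) < (M + 1 : ℝ) := by exact_mod_cast hNM
    linarith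
  have hsum : ∑ i : Fin (M+1), d i = ((M + 1 : ℝ) - N) * (A * B).det := sum_det_eq' A B
  have hle : ∑ i : Fin (M+1), d i ≤ (M + 1 : ℝ) * S := by
    have := Finset.sum_le_card_nsmul Finset.univ d S
      (fun i _ => Finset.le_sup' d (Finset.mem_univ i))
    rw [Finset.card_univ, Fintype.card_fin, nsmul_eq_mul] at this
    push_cast at this
    exact this
  rw [div_mul_eq_mul_div, le_div_iff₀ hpos]
  nlinarith [hsum, hle]
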